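/- Let S_1, S_2, … be a sequence where S_i is an ε_i-nearly k-distance set in ℝ^{d'} with distances 1 ≤ t_1^i < … < t_k^i and ε_i → 0. If there is a constant K such that t_{j+1}^i / t_j^i ≤ K for all i and 1 ≤ j < k, then limsup_{i→∞} |S_i| ≤ m_k(d'). -/

import Mathlib

open scoped BigOperators RealInnerProductSpace
open Filter

noncomputable section

abbrev Pt (d : ℕ) := EuclideanSpace ℝ (Fin d)

def Separated {d : ℕ} (S : Finset (Pt d)) : Prop :=
  ∀ p ∈ S, ∀ q ∈ S, p ≠ q → 1 ≤ dist p q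

def IsKDistSet {d : ℕ} (k : ℕ) (S : Finset (Pt d)) : Prop :=
  ∃ D : Finset ℝ, D.card ≤ k ∧ ∀ p ∈ S, ∀ q ∈ S, p ≠ q → dist p q ∈ D

def mDist (k d : ℕ) : ℕ :=
  sSup {n : ℕ | ∃ S : Finset (Pt d), S.card = n ∧ IsKDistSet k S}

def IsNearlyKDist {d : ℕ} (k : ℕ) (ε : ℝ) (S : Finset (Pt d)) : Prop :=
  Separated S ∧ ∃ t : ℕ → ℝ, (∀ i < k, 1 ≤ t i) ∧
    ∀ p ∈ S, ∀ q ∈ S, p ≠ q → ∃ i < k, dist p q ∈ Set.Icc (t i) (t i + ε)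

def Mnear (k d : ℕ) : ℕ :=
  sSup {M : ℕ | ∀ ε : ℝ, 0 < ε → ∃ S : Finset (Pt d), S.card = M ∧ IsNearlyKDist k ε S}

def vsAngle {d : ℕ} (v : Pt d) (Λ : Submodule ℝ (Pt d)) : ℝ :=
  sInf {θ : ℝ | ∃ w ∈ Λ, w ≠ 0 ∧ θ = InnerProductGeometry.angle v w}

def IsFlatAt {d : ℕ} (S : Finset (Pt d)) (p : Pt d) (j : ℕ) (α : ℝ) : Prop :=
  ∃ Λ : Submodule ℝ (Pt d), Module.finrank ℝ Λ = j ∧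
    ∀ q ∈ S, q ≠ p → vsAngle (p - q) Λ ≤ α

def Nflat (k d' d : ℕ) : ℕ :=
  sSup {N : ℕ | ∀ ε α : ℝ, 0 < ε → 0 < α →
    ∃ S : Finset (Pt d'), S.card = N ∧ IsNearlyKDist k ε S ∧ ∀ p ∈ S, IsFlatAt S p d α}

def turanNum (n s : ℕ) : ℕ :=
  n.choose 2 - ((n % s) * (n / s + 1).choose 2 + (s - n % s) * (n / s).choose 2)

open Classical in
def nearPairs {d : ℕ} (S : Finset (Pt d)) (k : ℕ) (ε : ℝ) (t : ℕ → ℝ) :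
    Finset (Pt d × Pt d) :=
  S.offDiag.filter (fun pq => ∃ i < k, dist pq.1 pq.2 ∈ Set.Icc (t i) (t i + ε))

def Mkdn (k d n : ℕ) : ℕ :=
  sSup {M : ℕ | ∃ (S : Finset (Pt d)) (t : ℕ → ℝ), S.card = n ∧ Separated S ∧
    (∀ i < k, 1 ≤ t i) ∧ (nearPairs S k 1 t).card = 2 * M}



open MvPolynomial in
lemma kdist_card_le {d k : ℕ} (S : Finset (Pt d)) (h : IsKDistSet k S) :
    S.card ≤ Module.finrank ℝ (restrictTotalDegree (Fin d) ℝ (2*k)) := by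
  obtain ⟨D, hDcard, hD⟩ := h
  set D' : Finset ℝ := D.erase 0 with hD'
  set P : Pt d → MvPolynomial (Fin d) ℝ := fun p =>
    ∏ c ∈ D', ((∑ m, (X m - C (p m))^2) - C (c^2)) with hP
  have hdeg : ∀ p, (P p).totalDegree ≤ 2*k := by
    intro p
    refine (totalDegree_finset_prod _ _).trans ?_
    have h2 : ∀ c ∈ D', ((∑ m, (X m - C (p m))^2) - C (c^2)).totalDegree ≤ 2 := by
      intro c _
      rw [sub_eq_add_neg, ← C_neg]
      refine (totalDegree_add _ _).trans (max_le ?_ (le_trans (le_of_eq (totalDegree_C _)) (by norm_num)))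
      refine totalDegree_finsetSum_le ?_
      intro m _
      have h1 : ((X m - C (p m)) : MvPolynomial (Fin d) ℝ).totalDegree ≤ 1 := by
        rw [sub_eq_add_neg, ← C_neg]
        exact (totalDegree_add _ _).trans (max_le (le_of_eq (totalDegree_X _))
          (le_trans (le_of_eq (totalDegree_C _)) zero_le_one))
      refine (totalDegree_pow _ _).trans ?_
      have := Nat.mul_le_mul_left 2 h1
      omega
    calc ∑ c ∈ D', ((∑ m, (X m - C (p m))^2) - C (c^2)).totalDegree
        ≤ ∑ c ∈ D', 2 := Finset.sum_le_sum h2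
      _ = 2 * D'.card := by rw [Finset.sum_const]; ring
      _ ≤ 2 * k := by
          have : D'.card ≤ D.card := Finset.card_erase_le
          omega
  have heval : ∀ p q : Pt d, eval (fun m => q m) (P p)
      = ∏ c ∈ D', ((dist q p)^2 - c^2) := by
    intro p q
    have hd : (dist q p)^2 = ∑ m, (q m - p m)^2 := by
      rw [EuclideanSpace.dist_eq, Real.sq_sqrt (by positivity)]
      simp [Real.dist_eq, sq_abs]
    rw [hP]
    simp [hd]
  have hzero : ∀ p ∈ S, ∀ q ∈ S, q ≠ p → eval (fun m => q m) (P p) = 0 := by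
    intro p hp q hq hne
    rw [heval]
    refine Finset.prod_eq_zero (i := dist q p) ?_ (by ring)
    refine Finset.mem_erase.2 ⟨dist_ne_zero.2 hne, hD q hq p hp hne⟩
  have hnz : ∀ p : Pt d, eval (fun m => p m) (P p) ≠ 0 := by
    intro p
    rw [heval]
    refine Finset.prod_ne_zero_iff.2 ?_
    intro c hc
    have : c ≠ 0 := Finset.ne_of_mem_erase hc
    simp only [dist_self]
    intro hcon
    apply this
    nlinarith [hcon]
  have hli : LinearIndependent ℝ (fun p : S => P p.1) := by
    rw [Fintype.linearIndependent_iff]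
    intro g hg q
    have := congrArg (eval (fun m => (q:Pt d) m)) hg
    rw [map_sum, map_zero] at this
    have h2 : ∀ p : S, eval (fun m => (q:Pt d) m) (g p • P p.1)
        = g p * eval (fun m => (q:Pt d) m) (P p.1) := by
      intro p; rw [smul_eq_C_mul, map_mul, eval_C]
    rw [Finset.sum_congr rfl (fun p _ => h2 p)] at this
    rw [Finset.sum_eq_single q (fun p _ hpq => by
        rw [hzero p.1 p.2 q.1 q.2 (by simpa using (Subtype.coe_injective.ne_iff.2 hpq.symm)), mul_zero])
      (by simp)] at this
    rcases mul_eq_zero.1 this with h | h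
    · exact h
    · exact absurd h (hnz q.1)
  have hmem : ∀ p : Pt d, P p ∈ restrictTotalDegree (Fin d) ℝ (2*k) :=
    fun p => (mem_restrictTotalDegree _ _ _).2 (hdeg p)
  have hli2 : LinearIndependent ℝ (fun p : S =>
      (⟨P p.1, hmem p.1⟩ : restrictTotalDegree (Fin d) ℝ (2*k))) := by
    apply LinearIndependent.of_comp (restrictTotalDegree (Fin d) ℝ (2*k)).subtype
    exact hli
  have := hli2.fintype_card_le_finrank
  simpa [Fintype.card_coe] using this


lemma kdist_bddAbove (d k : ℕ) :
    BddAbove {n : ℕ | ∃ S : Finset (Pt d), S.card = n ∧ IsKDistSet k S} := by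
  refine ⟨Module.finrank ℝ (MvPolynomial.restrictTotalDegree (Fin d) ℝ (2*k)), ?_⟩
  rintro n ⟨S0, rfl, hkd⟩
  exact kdist_card_le S0 hkd

theorem stmt7 (d' k : ℕ) (hk : 1 ≤ k)
    (S : ℕ → Finset (Pt d')) (ε : ℕ → ℝ) (t : ℕ → ℕ → ℝ) (K : ℝ)
    (hε : ∀ i, 0 < ε i) (hεlim : Tendsto ε atTop (nhds 0))
    (ht1 : ∀ i, 1 ≤ t i 0)
    (htmono : ∀ i j, j + 1 < k → t i j < t i (j + 1))
    (hratio : ∀ i j, j + 1 < k → t i (j + 1) ≤ K * t i j)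
    (hSsep : ∀ i, Separated (S i))
    (hSdist : ∀ i, ∀ p ∈ S i, ∀ q ∈ S i, p ≠ q →
      ∃ j < k, dist p q ∈ Set.Icc (t i j) (t i j + ε i)) :
    ∀ᶠ i in atTop, (S i).card ≤ mDist k d' := by
  classical
  by_contra hcon
  set m := mDist k d' with hm
  rw [Filter.not_eventually] at hcon
  have hfreq : ∃ᶠ i in atTop, i ∈ {i | m + 1 ≤ (S i).card} :=
    hcon.mono (fun i h => by simpa using Nat.succ_le_of_lt (Nat.lt_of_not_le h))
  rw [Filter.frequently_iff_neBot] at hfreq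
  haveI : (atTop ⊓ 𝓟 {i | m + 1 ≤ (S i).card}).NeBot := hfreq
  set U : Ultrafilter ℕ := Ultrafilter.of (atTop ⊓ 𝓟 {i | m + 1 ≤ (S i).card}) with hUdef
  have hUle : (U : Filter ℕ) ≤ atTop ⊓ 𝓟 {i | m + 1 ≤ (S i).card} := Ultrafilter.of_le _
  have hUat : (U : Filter ℕ) ≤ atTop := hUle.trans inf_le_left
  have hUA : {i | m + 1 ≤ (S i).card} ∈ U :=
    (hUle.trans inf_le_right) (Filter.mem_principal_self _)
  -- choose m+1 points in each large S i
  set g : ℕ → Fin (m+1) → Pt d' := fun i a =>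
    if h : m + 1 ≤ (S i).card then ((S i).equivFin.symm (Fin.castLE h a) : Pt d') else 0
    with hgdef
  have hg_mem : ∀ i, m + 1 ≤ (S i).card → ∀ a, g i a ∈ S i := by
    intro i h a
    simp only [hgdef, dif_pos h]
    exact ((S i).equivFin.symm (Fin.castLE h a)).2
  have hg_inj : ∀ i, m + 1 ≤ (S i).card → ∀ a b : Fin (m+1), a ≠ b → g i a ≠ g i b := by
    intro i h a b hab
    simp only [hgdef, dif_pos h]
    intro hcon2
    exact hab (Fin.castLE_injective h ((S i).equivFin.symm.injective (Subtype.val_injective hcon2)))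
  -- constants
  set K' : ℝ := max K 1 with hK'def
  have hK'1 : (1:ℝ) ≤ K' := le_max_right _ _
  have ht0pos : ∀ i, (0:ℝ) < t i 0 := fun i => lt_of_lt_of_le one_pos (ht1 i)
  have htlb : ∀ i, ∀ j, j < k → t i 0 ≤ t i j := by
    intro i j hj
    induction j with
    | zero => exact le_refl _
    | succ n ih =>
        have h1 : n < k := Nat.lt_of_succ_lt hj
        exact (ih h1).trans (le_of_lt (htmono i n hj))
  have htub : ∀ i, ∀ j, j < k → t i j ≤ K' ^ (k-1) * t i 0 := by
    intro i j hj
    have key : t i j ≤ K' ^ j * t i 0 := by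
      induction j with
      | zero => simpa using le_refl (t i 0)
      | succ n ih =>
          have h1 : n < k := Nat.lt_of_succ_lt hj
          have h2 := hratio i n hj
          have h3 : t i n ≤ K' ^ n * t i 0 := ih h1
          have htn : (0:ℝ) < t i n := lt_of_lt_of_le (ht0pos i) (htlb i n h1)
          have hK : K ≤ K' := le_max_left _ _
          calc t i (n+1) ≤ K * t i n := h2
            _ ≤ K' * t i n := by nlinarith
            _ ≤ K' * (K' ^ n * t i 0) := by nlinarith
            _ = K' ^ (n+1) * t i 0 := by ring
    refine key.trans ?_
    have : K' ^ j ≤ K' ^ (k-1) := pow_le_pow_right₀ hK'1 (by omega)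
    nlinarith [le_of_lt (ht0pos i)]
  set R : ℝ := K' ^ (k-1) + 1 with hRdef
  have hR1 : (1:ℝ) ≤ R := by
    have : (1:ℝ) ≤ K' ^ (k-1) := one_le_pow₀ hK'1
    linarith
  -- scaled points and distances
  set x : ℕ → Fin (m+1) → Pt d' := fun i a => (t i 0)⁻¹ • (g i a - g i 0) with hxdef
  set s' : ℕ → Fin k → ℝ := fun i j => t i (j:ℕ) / t i 0 with hs'def
  have hxdist : ∀ i a b, dist (x i a) (x i b) = dist (g i a) (g i b) / t i 0 := by
    intro i a b
    simp only [hxdef]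
    rw [dist_smul₀, dist_sub_right, Real.norm_eq_abs,
      abs_of_pos (inv_pos.2 (ht0pos i)), inv_mul_eq_div]
  have hs'lb : ∀ i (j : Fin k), 1 ≤ s' i j := by
    intro i j
    rw [hs'def]
    rw [le_div_iff₀ (ht0pos i)]
    simpa using (htlb i j j.2).trans' (by simpa using (ht1 i))
  have hs'ub : ∀ i (j : Fin k), s' i j ≤ R := by
    intro i j
    rw [hs'def, div_le_iff₀ (ht0pos i), hRdef]
    have := htub i j j.2
    nlinarith [le_of_lt (ht0pos i)]
  -- compactness setup
  set F : ℕ → (Fin (m+1) → Pt d') × (Fin k → ℝ) := fun i => (x i, s' i) with hFdef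
  set C : Set ((Fin (m+1) → Pt d') × (Fin k → ℝ)) :=
    (Set.univ.pi fun _ => Metric.closedBall (0 : Pt d') R) ×ˢ
    (Set.univ.pi fun _ => Set.Icc (1:ℝ) R) with hCdef
  have hCcomp : IsCompact C :=
    (isCompact_univ_pi fun _ => isCompact_closedBall _ _).prod
      (isCompact_univ_pi fun _ => isCompact_Icc)
  have hε1 : ∀ᶠ i in (U : Filter ℕ), ε i < 1 :=
    hUat (hεlim.eventually (gt_mem_nhds one_pos))
  have hFC : ∀ᶠ i in (U : Filter ℕ), F i ∈ C := by
    filter_upwards [hε1, hUA] with i hεi hiA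
    constructor
    · intro a _
      simp only [Metric.mem_closedBall]
      rcases eq_or_ne a 0 with rfl | ha
      · show dist (x i 0) 0 ≤ R
        simp only [hxdef]
        simp only [sub_self, smul_zero, dist_self]
        linarith
      · have hne := hg_inj i hiA a 0 ha
        obtain ⟨j, hjk, hmem2⟩ := hSdist i _ (hg_mem i hiA a) _ (hg_mem i hiA 0) hne
        have : dist (x i a) (x i 0) ≤ R := by
          rw [hxdist]
          rw [div_le_iff₀ (ht0pos i)]
          have h1 : dist (g i a) (g i 0) ≤ t i j + ε i := hmem2.2
          have h2 := htub i j hjk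
          have h3 := ht1 i
          rw [hRdef]; nlinarith
        simpa [hxdef] using this
    · intro j _
      exact ⟨hs'lb i j, hs'ub i j⟩
  have hle : (U.map F : Filter _) ≤ 𝓟 C := by
    rw [le_principal_iff]
    exact Filter.mem_map.2 hFC
  obtain ⟨⟨y, sl⟩, hyC, hlim⟩ := hCcomp.ultrafilter_le_nhds (U.map F) hle
  have htend : Tendsto F (U : Filter ℕ) (nhds (y, sl)) := hlim
  have hxt : ∀ a, Tendsto (fun i => x i a) (U : Filter ℕ) (nhds (y a)) := by
    intro a
    have : Tendsto (fun p : (Fin (m+1) → Pt d') × (Fin k → ℝ) => p.1 a)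
        (nhds (y, sl)) (nhds (y a)) :=
      ((continuous_apply a).comp continuous_fst).continuousAt
    exact this.comp htend
  have hst : ∀ j, Tendsto (fun i => s' i j) (U : Filter ℕ) (nhds (sl j)) := by
    intro j
    have : Tendsto (fun p : (Fin (m+1) → Pt d') × (Fin k → ℝ) => p.2 j)
        (nhds (y, sl)) (nhds (sl j)) :=
      ((continuous_apply j).comp continuous_snd).continuousAt
    exact this.comp htend
  have hεt : Tendsto ε (U : Filter ℕ) (nhds 0) := hεlim.mono_left hUat
  -- index selection
  set J : ℕ → Fin (m+1) → Fin (m+1) → Fin k := fun i a b =>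
    if h : ∃ j, j < k ∧ dist (g i a) (g i b) ∈ Set.Icc (t i j) (t i j + ε i)
    then ⟨h.choose, h.choose_spec.1⟩ else ⟨0, hk⟩
    with hJdef
  have hJspec : ∀ i a b, m + 1 ≤ (S i).card → a ≠ b →
      dist (g i a) (g i b) ∈ Set.Icc (t i (J i a b : ℕ)) (t i (J i a b : ℕ) + ε i) := by
    intro i a b hi hab
    have hex : ∃ j, j < k ∧ dist (g i a) (g i b) ∈ Set.Icc (t i j) (t i j + ε i) := by
      obtain ⟨j, hjk, hmem2⟩ := hSdist i _ (hg_mem i hi a) _ (hg_mem i hi b) (hg_inj i hi a b hab)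
      exact ⟨j, hjk, hmem2⟩
    simp only [hJdef, dif_pos hex]
    exact hex.choose_spec.2
  have hall : ∀ a b : Fin (m+1), ∃ j : Fin k, {i | J i a b = j} ∈ U := by
    intro a b
    have huniv : (⋃ j ∈ (Set.univ : Set (Fin k)), {i | J i a b = j}) ∈ U := by
      have : (⋃ j ∈ (Set.univ : Set (Fin k)), {i | J i a b = j}) = Set.univ := by
        ext i; simp
      rw [this]
      exact Filter.univ_mem
    obtain ⟨j, _, hj⟩ := (Ultrafilter.finite_biUnion_mem_iff Set.finite_univ).1 huniv
    exact ⟨j, hj⟩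
  choose jsel hjsel using hall
  -- limit distances
  have hsl1 : ∀ j : Fin k, 1 ≤ sl j := by
    intro j
    exact ge_of_tendsto (hst j) (Filter.Eventually.of_forall (fun i => hs'lb i j))
  have hdab : ∀ a b : Fin (m+1), a ≠ b → dist (y a) (y b) = sl (jsel a b) := by
    intro a b hab
    have hdt : Tendsto (fun i => dist (x i a) (x i b)) (U : Filter ℕ)
        (nhds (dist (y a) (y b))) := (hxt a).dist (hxt b)
    have ev1 : ∀ᶠ i in (U : Filter ℕ),
        s' i (jsel a b) ≤ dist (x i a) (x i b) ∧
        dist (x i a) (x i b) ≤ s' i (jsel a b) + ε i := by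
      filter_upwards [hUA, hjsel a b] with i hiA hiJ
      have hspec := hJspec i a b hiA hab
      rw [hiJ] at hspec
      have h1 : (0:ℝ) < t i 0 := ht0pos i
      have h2 : (1:ℝ) ≤ t i 0 := ht1 i
      have hεi := le_of_lt (hε i)
      constructor
      · rw [hxdist, hs'def, div_le_div_iff_of_pos_right h1]
        exact hspec.1
      · rw [hxdist, hs'def]
        have := hspec.2
        rw [div_le_iff₀ h1]
        have : t i (jsel a b : ℕ) / t i 0 * t i 0 = t i (jsel a b : ℕ) := by
          field_simp
        nlinarith [hspec.2]
    have hlow : sl (jsel a b) ≤ dist (y a) (y b) :=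
      le_of_tendsto_of_tendsto (hst (jsel a b)) hdt (ev1.mono fun i h => h.1)
    have hup : dist (y a) (y b) ≤ sl (jsel a b) := by
      have h2 : Tendsto (fun i => s' i (jsel a b) + ε i) (U : Filter ℕ)
          (nhds (sl (jsel a b) + 0)) := (hst (jsel a b)).add hεt
      have := le_of_tendsto_of_tendsto hdt h2 (ev1.mono fun i h => h.2)
      linarith
    linarith
  have hyinj : Function.Injective y := by
    intro a b hab
    by_contra hne
    have h1 := hdab a b hne
    have h2 := hsl1 (jsel a b)
    rw [hab] at h1
    simp only [dist_self] at h1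
    linarith
  set T : Finset (Pt d') := Finset.image y Finset.univ with hTdef
  have hTcard : T.card = m + 1 := by
    rw [hTdef, Finset.card_image_of_injective _ hyinj, Finset.card_univ, Fintype.card_fin]
  have hKD : IsKDistSet k T := by
    refine ⟨Finset.image sl Finset.univ, ?_, ?_⟩
    · exact Finset.card_image_le.trans (by simp)
    · intro p hp q hq hpq
      rw [hTdef] at hp hq
      obtain ⟨a, _, rfl⟩ := Finset.mem_image.1 hp
      obtain ⟨b, _, rfl⟩ := Finset.mem_image.1 hq
      have hab : a ≠ b := fun h => hpq (by rw [h])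
      rw [hdab a b hab]
      exact Finset.mem_image.2 ⟨jsel a b, Finset.mem_univ _, rfl⟩
  have hBdd : BddAbove {n : ℕ | ∃ S : Finset (Pt d'), S.card = n ∧ IsKDistSet k S} :=
    kdist_bddAbove d' k
  have hmemset : m + 1 ∈ {n : ℕ | ∃ S : Finset (Pt d'), S.card = n ∧ IsKDistSet k S} :=
    ⟨T, hTcard, hKD⟩
  have : m + 1 ≤ mDist k d' := le_csSup hBdd hmemset
  omega


end
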